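/- For 0 ≤ k ≤ ⌊n/2⌋, the incomplete q-Chebyshev polynomials of the second kind satisfy the non-homogeneous recurrence U_{n+2}^k = (1+q^{n+2}) x U_{n+1}^k + q^{n+1} s U_n^k − q^{n+1+k²} [n-k choose k]_q · ((-q;q)_{n-k}/(-q;q)_k) · s^{k+1} x^{n-2k}. -/

import Mathlib

/-- q-integer [n]_q = (1-q^n)/(1-q). -/
noncomputable def qint (q : ℂ) (n : ℕ) : ℂ := (1 - q ^ n) / (1 - q)

/-- q-factorial [n]_q!. -/
noncomputable def qfact (q : ℂ) (n : ℕ) : ℂ := ∏ i ∈ Finset.range n, qint q (i + 1)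

/-- Gaussian (q-binomial) coefficient, 0 for k > n. -/
noncomputable def qbinom (q : ℂ) (n k : ℕ) : ℂ :=
  if k ≤ n then qfact q n / (qfact q (n - k) * qfact q k) else 0

/-- q-shifted factorial (x;q)_n. -/
noncomputable def qpoch (x q : ℂ) (n : ℕ) : ℂ := ∏ i ∈ Finset.range n, (1 - q ^ i * x)

/-- Partial sum defining incomplete q-Chebyshev polynomials of the second kind:
`Usum x s q n (k+1)` is U_n^k(x,s,q), and `Usum x s q n 0 = 0` is the empty sum (k = -1). -/
noncomputable def Usum (x s q : ℂ) (n m : ℕ) : ℂ :=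
  ∑ j ∈ Finset.range m,
    q ^ (j ^ 2) * qbinom q (n - j) j * (qpoch (-q) q (n - j) / qpoch (-q) q j) *
      s ^ j * x ^ (n - 2 * j)

/-- Partial sum defining incomplete q-Chebyshev polynomials of the first kind:
`Tsum x s q n (k+1)` is T_n^k(x,s,q). -/
noncomputable def Tsum (x s q : ℂ) (n m : ℕ) : ℂ :=
  ∑ j ∈ Finset.range m,
    q ^ (j ^ 2) * (qint q n / qint q (n - j)) * qbinom q (n - j) j *
      (qpoch (-q) q (n - j - 1) / qpoch (-q) q j) * s ^ j * x ^ (n - 2 * j)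


lemma pow_abs_lt {q : ℂ} (hq1 : ‖q‖ < 1) (m : ℕ) (hm : 1 ≤ m) :
    ‖q ^ m‖ < 1 := by
  rw [norm_pow]
  calc ‖q‖ ^ m ≤ ‖q‖ ^ 1 :=
        pow_le_pow_of_le_one (norm_nonneg q) hq1.le hm
    _ < 1 := by simpa using hq1

lemma mypow_ne_one {q : ℂ} (hq1 : ‖q‖ < 1) (m : ℕ) (hm : 1 ≤ m) : q ^ m ≠ 1 := by
  intro h
  have := pow_abs_lt hq1 m hm
  rw [h] at this; simp at this

lemma one_add_pow_ne {q : ℂ} (hq1 : ‖q‖ < 1) (m : ℕ) (hm : 1 ≤ m) :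
    1 + q ^ m ≠ 0 := by
  intro h
  have h2 : q ^ m = -1 := by linear_combination h
  have := pow_abs_lt hq1 m hm
  rw [h2] at this; simp at this

lemma one_sub_q_ne {q : ℂ} (hq1 : ‖q‖ < 1) : (1 : ℂ) - q ≠ 0 := by
  have := mypow_ne_one hq1 1 le_rfl
  rw [pow_one] at this
  exact sub_ne_zero.2 (Ne.symm this)

lemma qint_ne {q : ℂ} (hq1 : ‖q‖ < 1) (m : ℕ) (hm : 1 ≤ m) : qint q m ≠ 0 :=
  div_ne_zero (sub_ne_zero.2 (Ne.symm (mypow_ne_one hq1 m hm))) (one_sub_q_ne hq1)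

lemma qfact_ne {q : ℂ} (hq1 : ‖q‖ < 1) (m : ℕ) : qfact q m ≠ 0 :=
  Finset.prod_ne_zero_iff.2 fun i _ => qint_ne hq1 (i + 1) (by omega)

lemma qpoch_ne {q : ℂ} (hq1 : ‖q‖ < 1) (m : ℕ) : qpoch (-q) q m ≠ 0 := by
  refine Finset.prod_ne_zero_iff.2 fun i _ => ?_
  have h := one_add_pow_ne hq1 (i + 1) (by omega)
  have e : 1 - q ^ i * (-q) = 1 + q ^ (i + 1) := by ring
  rw [e]; exact h

lemma qfact_succ (q : ℂ) (m : ℕ) : qfact q (m + 1) = qfact q m * qint q (m + 1) :=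
  Finset.prod_range_succ _ _

lemma qpoch_succ (x q : ℂ) (m : ℕ) : qpoch x q (m + 1) = qpoch x q m * (1 - q ^ m * x) :=
  Finset.prod_range_succ _ _

lemma qbinom_eq (q : ℂ) (n k : ℕ) (h : k ≤ n) :
    qbinom q n k = qfact q n / (qfact q (n - k) * qfact q k) := if_pos h

lemma qbinom_zero {q : ℂ} (hq1 : ‖q‖ < 1) (n : ℕ) : qbinom q n 0 = 1 := by
  rw [qbinom_eq q n 0 (Nat.zero_le _)]
  have h0 : qfact q 0 = 1 := by simp [qfact]
  rw [Nat.sub_zero, h0, mul_one]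
  exact div_self (qfact_ne hq1 n)

set_option maxHeartbeats 1000000 in
lemma key_term {q : ℂ} (hq1 : ‖q‖ < 1) (x s : ℂ) (i d : ℕ) :
    q ^ ((i+1) ^ 2) * qbinom q (i+d+3) (i+1) * (qpoch (-q) q (i+d+3) / qpoch (-q) q (i+1)) *
        s ^ (i+1) * x ^ (d+2)
    = (1 + q ^ (2*i+d+4)) * x *
        (q ^ ((i+1) ^ 2) * qbinom q (i+d+2) (i+1) * (qpoch (-q) q (i+d+2) / qpoch (-q) q (i+1)) *
          s ^ (i+1) * x ^ (d+1))
      + q ^ (2*i+d+3) * s *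
        (q ^ (i ^ 2) * qbinom q (i+d+2) i * (qpoch (-q) q (i+d+2) / qpoch (-q) q i) *
          s ^ i * x ^ (d+2)) := by
  rw [qbinom_eq q (i+d+3) (i+1) (by omega), qbinom_eq q (i+d+2) (i+1) (by omega),
      qbinom_eq q (i+d+2) i (by omega)]
  have e1 : i+d+3 - (i+1) = d+2 := by omega
  have e2 : i+d+2 - (i+1) = d+1 := by omega
  have e3 : i+d+2 - i = d+2 := by omega
  rw [e1, e2, e3]
  have f1 : qfact q (i+d+3) = qfact q (i+d+2) * qint q (i+d+3) := qfact_succ q (i+d+2)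
  have f2 : qfact q (d+2) = qfact q (d+1) * qint q (d+2) := qfact_succ q (d+1)
  have f3 : qfact q (i+1) = qfact q i * qint q (i+1) := qfact_succ q i
  have p1 : qpoch (-q) q (i+d+3) = qpoch (-q) q (i+d+2) * (1 + q ^ i * q ^ d * q ^ 3) := by
    rw [qpoch_succ]
    congr 1
    ring
  have p2 : qpoch (-q) q (i+1) = qpoch (-q) q i * (1 + q ^ i * q) := by
    rw [qpoch_succ]
    congr 1
    ring
  rw [f1, f2, f3, p1, p2]
  simp only [qint]
  have E1 : q ^ ((i+1)^2) = q ^ (i^2) * (q^i)^2 * q := by ring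
  have E2 : q ^ (i+d+3) = q^i * q^d * q^3 := by ring
  have E3 : q ^ (d+2) = q^d * q^2 := by ring
  have E4 : q ^ (i+1) = q^i * q := by ring
  have E5 : q ^ (2*i+d+4) = (q^i)^2 * q^d * q^4 := by ring
  have E6 : q ^ (2*i+d+3) = (q^i)^2 * q^d * q^3 := by ring
  have E7 : s ^ (i+1) = s^i * s := by ring
  have E8 : x ^ (d+2) = x^d * x^2 := by ring
  have E9 : x ^ (d+1) = x^d * x := by ring
  rw [E1, E2, E3, E4, E5, E6, E7, E8, E9]
  have n1 : qfact q (i+d+2) ≠ 0 := qfact_ne hq1 _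
  have n2 : qfact q (d+1) ≠ 0 := qfact_ne hq1 _
  have n3 : qfact q i ≠ 0 := qfact_ne hq1 _
  have n4 : qpoch (-q) q (i+d+2) ≠ 0 := qpoch_ne hq1 _
  have n5 : qpoch (-q) q i ≠ 0 := qpoch_ne hq1 _
  have n6 : (1:ℂ) - q ≠ 0 := one_sub_q_ne hq1
  have m2 : 1 - q^i * q ≠ 0 := by
    have h := sub_ne_zero.2 (Ne.symm (mypow_ne_one hq1 (i+1) (by omega)))
    rwa [E4] at h
  have m3 : 1 - q^d * q^2 ≠ 0 := by
    have h := sub_ne_zero.2 (Ne.symm (mypow_ne_one hq1 (d+2) (by omega)))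
    rwa [E3] at h
  have m5 : 1 - q^i * q^d * q^3 ≠ 0 := by
    have h := sub_ne_zero.2 (Ne.symm (mypow_ne_one hq1 (i+d+3) (by omega)))
    rwa [E2] at h
  have m4 : 1 + q^i * q ≠ 0 := by
    have h := one_add_pow_ne hq1 (i+1) (by omega)
    rwa [E4] at h
  have m6 : 1 + q^i * q^d * q^3 ≠ 0 := by
    have h := one_add_pow_ne hq1 (i+d+3) (by omega)
    rwa [E2] at h
  generalize q ^ i = u at m2 m4 m5 m6 ⊢
  generalize q ^ d = v at m3 m5 m6 ⊢
  generalize q ^ (i^2) = w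
  generalize s ^ i = S
  generalize x ^ d = X
  generalize qfact q (i+d+2) = A at n1 ⊢
  generalize qfact q (d+1) = B at n2 ⊢
  generalize qfact q i = C at n3 ⊢
  generalize qpoch (-q) q (i+d+2) = P at n4 ⊢
  generalize qpoch (-q) q i = R at n5 ⊢
  field_simp
  have m3' : (1:ℂ) - q ^ 2 * v ≠ 0 := by rw [mul_comm]; exact m3
  field_simp
  ring

lemma term_zero {q : ℂ} (hq1 : ‖q‖ < 1) (x s : ℂ) (n : ℕ) :
    q ^ (0 ^ 2) * qbinom q (n + 2 - 0) 0 * (qpoch (-q) q (n + 2 - 0) / qpoch (-q) q 0) *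
        s ^ 0 * x ^ (n + 2 - 2 * 0)
    = (1 + q ^ (n + 2)) * x *
        (q ^ (0 ^ 2) * qbinom q (n + 1 - 0) 0 * (qpoch (-q) q (n + 1 - 0) / qpoch (-q) q 0) *
          s ^ 0 * x ^ (n + 1 - 2 * 0)) := by
  simp only [Nat.sub_zero, Nat.mul_zero, pow_zero]
  rw [qbinom_zero hq1, qbinom_zero hq1]
  have h0 : qpoch (-q) q 0 = 1 := Finset.prod_range_zero _
  rw [h0]
  rw [show qpoch (-q) q (n + 2) = qpoch (-q) q (n + 1) * (1 - q ^ (n + 1) * (-q)) from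
    qpoch_succ _ _ (n + 1)]
  ring

theorem Uinc_nonhom_rec (q : ℂ) (hq0 : 0 < ‖q‖) (hq1 : ‖q‖ < 1)
    (x s : ℂ) (n k : ℕ) (hk : 2 * k ≤ n) :
    Usum x s q (n + 2) (k + 1) =
      (1 + q ^ (n + 2)) * x * Usum x s q (n + 1) (k + 1) +
        q ^ (n + 1) * s * Usum x s q n (k + 1) -
        q ^ (n + 1 + k ^ 2) * qbinom q (n - k) k *
          (qpoch (-q) q (n - k) / qpoch (-q) q k) * s ^ (k + 1) * x ^ (n - 2 * k) := by
  set F : ℕ → ℕ → ℂ := fun N j =>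
    q ^ (j ^ 2) * qbinom q (N - j) j * (qpoch (-q) q (N - j) / qpoch (-q) q j) *
      s ^ j * x ^ (N - 2 * j) with hF
  have hU : ∀ N m : ℕ, Usum x s q N m = ∑ j ∈ Finset.range m, F N j := fun N m => rfl
  have hterm : ∀ i ∈ Finset.range k,
      F (n + 2) (i + 1) = (1 + q ^ (n + 2)) * x * F (n + 1) (i + 1) + q ^ (n + 1) * s * F n i := by
    intro i hi
    have hik : i < k := Finset.mem_range.mp hi
    obtain ⟨d, hd⟩ : ∃ d, n = 2 * i + 2 + d := ⟨n - (2 * i + 2), by omega⟩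
    subst hd
    simp only [hF]
    rw [show 2 * i + 2 + d + 2 - (i + 1) = i + d + 3 by omega,
        show 2 * i + 2 + d + 2 - 2 * (i + 1) = d + 2 by omega,
        show 2 * i + 2 + d + 1 - (i + 1) = i + d + 2 by omega,
        show 2 * i + 2 + d + 1 - 2 * (i + 1) = d + 1 by omega,
        show 2 * i + 2 + d - i = i + d + 2 by omega,
        show 2 * i + 2 + d - 2 * i = d + 2 by omega,
        show 2 * i + 2 + d + 2 = 2 * i + d + 4 by omega,
        show 2 * i + 2 + d + 1 = 2 * i + d + 3 by omega]
    exact key_term hq1 x s i d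
  have h00 : F (n + 2) 0 = (1 + q ^ (n + 2)) * x * F (n + 1) 0 := by
    simp only [hF]
    exact term_zero hq1 x s n
  have hcorr : q ^ (n + 1 + k ^ 2) * qbinom q (n - k) k *
      (qpoch (-q) q (n - k) / qpoch (-q) q k) * s ^ (k + 1) * x ^ (n - 2 * k)
      = q ^ (n + 1) * s * F n k := by
    simp only [hF]
    ring
  rw [hU, hU, hU, Finset.sum_range_succ' (F (n + 2)) k,
      Finset.sum_range_succ' (F (n + 1)) k, Finset.sum_range_succ (F n) k,
      Finset.sum_congr rfl hterm, Finset.sum_add_distrib, ← Finset.mul_sum, ← Finset.mul_sum,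
      h00, hcorr]
  ring
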